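/- Assume the forward spiral condition V_{N+k} = M·T(V_{k−1}) for all k ≥ 1, the normalization det ρ_j = 1 for j = 0, 1, …, N, that a_j ≠ 0 for all j, and that a_N = a_1 and c_{−1} = a_{N−1}/a_0. Set A_j := c_j + a_j·b_{j−1} and assume A_1 ≠ 0. Then: (i) c_{N+2} = A_3/A_1; and (ii) M⁻¹·((V_{N+1}×V_{N+2})×(V_{N−1}×V_N)) = (A_0²·A_1/(c_{−1}·c_N))·V_0. Consequently M⁻¹·T̄(V_{N+1}) = (A_3·A_0²/(c_{−1}·c_N))·V_0, where T̄(V_{N+1}) := c_{N+2}·((V_{N+1}×V_{N+2})×(V_{N−1}×V_N)). -/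

import Mathlib

open Matrix

/-- The 3×3 matrix with columns `u, v, w`. -/
def colMat (u v w : Fin 3 → ℝ) : Matrix (Fin 3) (Fin 3) ℝ :=
  Matrix.of fun i j => ![u, v, w] j i

lemma colMat_det (u v w : Fin 3 → ℝ) :
    (colMat u v w).det = u 0 * v 1 * w 2 - u 0 * v 2 * w 1 - u 1 * v 0 * w 2
      + u 1 * v 2 * w 0 + u 2 * v 0 * w 1 - u 2 * v 1 * w 0 := by
  simp [colMat, Matrix.det_fin_three]
  ring

lemma tifCrossCross (u v w x : Fin 3 → ℝ) :
    crossProduct (crossProduct u v) (crossProduct w x)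
      = (colMat u v x).det • w - (colMat u v w).det • x := by
  funext i
  fin_cases i <;>
    simp [cross_apply, colMat_det, Pi.sub_apply, Pi.smul_apply, smul_eq_mul] <;> ring

lemma det_combo (e0 e1 e2 : Fin 3 → ℝ) (p q r p' q' r' p'' q'' r'' : ℝ) :
    (colMat (p•e0+q•e1+r•e2) (p'•e0+q'•e1+r'•e2) (p''•e0+q''•e1+r''•e2)).det
      = (p*(q'*r''-r'*q'') - q*(p'*r''-r'*p'') + r*(p'*q''-q'*p'')) * (colMat e0 e1 e2).det := by
  simp only [colMat_det, Pi.add_apply, Pi.smul_apply, smul_eq_mul]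
  ring

lemma det_swap23 (u v w : Fin 3 → ℝ) : (colMat u w v).det = -(colMat u v w).det := by
  simp only [colMat_det]; ring

lemma det_cyc (u v w : Fin 3 → ℝ) : (colMat v w u).det = (colMat u v w).det := by
  simp only [colMat_det]; ring

lemma det_third' (u v w : Fin 3 → ℝ) (p q r : ℝ) :
    (colMat u v (p • v + q • w + r • u)).det = q * (colMat u v w).det := by
  simp only [colMat_det, Pi.add_apply, Pi.smul_apply, smul_eq_mul]; ring

lemma det_third2 (u v w : Fin 3 → ℝ) (p q r : ℝ) :
    (colMat u v (p • v + q • u + r • w)).det = r * (colMat u v w).det := by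
  simp only [colMat_det, Pi.add_apply, Pi.smul_apply, smul_eq_mul]; ring

lemma mul_colMat (M : Matrix (Fin 3) (Fin 3) ℝ) (u v w : Fin 3 → ℝ) :
    M * colMat u v w = colMat (M.mulVec u) (M.mulVec v) (M.mulVec w) := by
  ext i j
  fin_cases j <;>
    simp [colMat, Matrix.mul_apply, Matrix.mulVec, dotProduct, Fin.sum_univ_three]

lemma colMat_mulVec (u v w x : Fin 3 → ℝ) :
    (colMat u v w).mulVec x = x 0 • u + x 1 • v + x 2 • w := by
  funext i
  simp [colMat, Matrix.mulVec, dotProduct, Fin.sum_univ_three]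
  ring

/-- under the forward spiral condition, the normalization
`det ρ_j = 1` for `j = 0, …, N`, `a_j ≠ 0` for all `j`, `a_N = a₁`,
`c_{−1} = a_{N−1}/a₀`, with `A_j = c_j + a_j·b_{j−1}` and `A₁ ≠ 0`:
(i) `c_{N+2} = A₃/A₁`;
(ii) `M⁻¹·((V_{N+1}×V_{N+2})×(V_{N−1}×V_N)) = (A₀²·A₁/(c_{−1}·c_N))·V₀`; and
consequently `M⁻¹·T̄(V_{N+1}) = (A₃·A₀²/(c_{−1}·c_N))·V₀`, where
`T̄(V_{N+1}) = c_{N+2}·((V_{N+1}×V_{N+2})×(V_{N−1}×V_N))`. -/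
theorem twisted_inverse_failure (N : ℕ) (hN : 5 ≤ N)
    (V : ℤ → Fin 3 → ℝ) (a b c : ℤ → ℝ)
    (hrec : ∀ j : ℤ, V (j + 3) = a j • V (j + 2) + b j • V (j + 1) + c j • V j)
    (ρ : ℤ → Matrix (Fin 3) (Fin 3) ℝ)
    (hρ : ∀ j : ℤ, ρ j = colMat (V j) (V (j + 1)) (V (j + 2)))
    (hρinv : ∀ j : ℤ, IsUnit (ρ j))
    (M : Matrix (Fin 3) (Fin 3) ℝ) (hM : M.det = 1)
    (T : ℤ → Fin 3 → ℝ)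
    (hT : ∀ j : ℤ, T j =
      crossProduct (crossProduct (V (j - 1)) (V (j + 1))) (crossProduct (V j) (V (j + 2))))
    (hfwd : ∀ k : ℤ, 1 ≤ k → V ((N : ℤ) + k) = M.mulVec (T (k - 1)))
    (hnorm : ∀ j : ℤ, 0 ≤ j → j ≤ (N : ℤ) → (ρ j).det = 1)
    (ha : ∀ j : ℤ, a j ≠ 0)
    (haN : a (N : ℤ) = a 1)
    (hcm1 : c (-1) = a ((N : ℤ) - 1) / a 0)
    (A : ℤ → ℝ) (hA : ∀ j : ℤ, A j = c j + a j * b (j - 1))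
    (hA1 : A 1 ≠ 0) :
    c ((N : ℤ) + 2) = A 3 / A 1 ∧
    M⁻¹.mulVec (crossProduct
        (crossProduct (V ((N : ℤ) + 1)) (V ((N : ℤ) + 2)))
        (crossProduct (V ((N : ℤ) - 1)) (V (N : ℤ))))
      = ((A 0) ^ 2 * A 1 / (c (-1) * c (N : ℤ))) • V 0 ∧
    M⁻¹.mulVec (c ((N : ℤ) + 2) • crossProduct
        (crossProduct (V ((N : ℤ) + 1)) (V ((N : ℤ) + 2)))
        (crossProduct (V ((N : ℤ) - 1)) (V (N : ℤ))))
      = (A 3 * (A 0) ^ 2 / (c (-1) * c (N : ℤ))) • V 0 := by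
  set n : ℤ := (N : ℤ) with hn
  have hn5 : (5:ℤ) ≤ n := by rw [hn]; exact_mod_cast hN
  -- determinant recursion
  have hstep : ∀ j : ℤ, (ρ (j+1)).det = c j * (ρ j).det := by
    intro j
    rw [hρ (j+1), hρ j, show j+1+1 = j+2 by ring, show j+1+2 = j+3 by ring, hrec j,
      colMat_det, colMat_det]
    simp only [Pi.add_apply, Pi.smul_apply, smul_eq_mul]
    ring
  have hc1 : ∀ j : ℤ, 0 ≤ j → j + 1 ≤ n → c j = 1 := by
    intro j h0 h1
    have h := hstep j
    rw [hnorm j h0 (by omega), hnorm (j+1) (by omega) h1] at h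
    linarith
  have hc0 : c 0 = 1 := hc1 0 (by norm_num) (by omega)
  have hcc1 : c 1 = 1 := hc1 1 (by norm_num) (by omega)
  have hcc2 : c 2 = 1 := hc1 2 (by norm_num) (by omega)
  have hcc3 : c 3 = 1 := hc1 3 (by norm_num) (by omega)
  have hccn1 : c (n-1) = 1 := hc1 (n-1) (by omega) (by omega)
  have hcne : c (-1) ≠ 0 := by rw [hcm1]; exact div_ne_zero (ha _) (ha _)
  have hρ0 : (ρ 0).det = 1 := hnorm 0 (by norm_num) (by omega)
  have hρ1 : (ρ 1).det = 1 := hnorm 1 (by norm_num) (by omega)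
  have hρ2 : (ρ 2).det = 1 := hnorm 2 (by norm_num) (by omega)
  have hρ3 : (ρ 3).det = 1 := hnorm 3 (by norm_num) (by omega)
  have hρn1 : (ρ (n-1)).det = 1 := hnorm (n-1) (by omega) (by omega)
  have hρn : (ρ n).det = 1 := hnorm n (by omega) (by omega)
  have hcd : c (-1) * (ρ (-1)).det = 1 := by
    have h := hstep (-1)
    rw [show (-1:ℤ)+1 = 0 by ring, hρ0] at h
    linarith
  -- T formula
  have hTf : ∀ j : ℤ, T j = (ρ (j-1)).det • V (j+2) - (b (j-1) * (ρ (j-1)).det) • V j := by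
    intro j
    have h2 : V (j+2) = a (j-1) • V (j+1) + b (j-1) • V j + c (j-1) • V (j-1) := by
      have h := hrec (j-1)
      rw [show j-1+3 = j+2 by ring, show j-1+2 = j+1 by ring, show j-1+1 = j by ring] at h
      exact h
    have hρj : ρ (j-1) = colMat (V (j-1)) (V j) (V (j+1)) := by
      rw [hρ (j-1), show j-1+1 = j by ring, show j-1+2 = j+1 by ring]
    have e2 : (colMat (V (j-1)) (V (j+1)) (V j)).det = -(ρ (j-1)).det := by
      rw [hρj, det_swap23]
    have e1 : (colMat (V (j-1)) (V (j+1)) (V (j+2))).det = -(b (j-1) * (ρ (j-1)).det) := by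
      rw [h2, det_third', e2]; ring
    rw [hT j, tifCrossCross, e1, e2]
    module
  -- forward images
  have hW1 : V (n+1) = M.mulVec ((ρ (-1:ℤ)).det • V 2 - (b (-1) * (ρ (-1:ℤ)).det) • V 0) := by
    have h := hfwd 1 le_rfl
    rw [show (1:ℤ)-1 = 0 by ring] at h
    have h0 := hTf 0
    rw [show (0:ℤ)-1 = -1 by ring, show (0:ℤ)+2 = 2 by ring] at h0
    rw [h, h0]
  have hW2 : V (n+2) = M.mulVec (V 3 - b 0 • V 1) := by
    have h := hfwd 2 (by norm_num)
    rw [show (2:ℤ)-1 = 1 by ring] at h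
    have h0 := hTf 1
    rw [show (1:ℤ)-1 = 0 by ring, show (1:ℤ)+2 = 3 by ring, hρ0] at h0
    rw [h, h0, one_smul, mul_one]
  have hW3 : V (n+3) = M.mulVec (V 4 - b 1 • V 2) := by
    have h := hfwd 3 (by norm_num)
    rw [show (3:ℤ)-1 = 2 by ring] at h
    have h0 := hTf 2
    rw [show (2:ℤ)-1 = 1 by ring, show (2:ℤ)+2 = 4 by ring, hρ1] at h0
    rw [h, h0, one_smul, mul_one]
  have hW4 : V (n+4) = M.mulVec (V 5 - b 2 • V 3) := by
    have h := hfwd 4 (by norm_num)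
    rw [show (4:ℤ)-1 = 3 by ring] at h
    have h0 := hTf 3
    rw [show (3:ℤ)-1 = 2 by ring, show (3:ℤ)+2 = 5 by ring, hρ2] at h0
    rw [h, h0, one_smul, mul_one]
  have hW5 : V (n+5) = M.mulVec (V 6 - b 3 • V 4) := by
    have h := hfwd 5 (by norm_num)
    rw [show (5:ℤ)-1 = 4 by ring] at h
    have h0 := hTf 4
    rw [show (4:ℤ)-1 = 3 by ring, show (4:ℤ)+2 = 6 by ring, hρ3] at h0
    rw [h, h0, one_smul, mul_one]
  -- M inverse
  have hMdet : IsUnit M.det := by rw [hM]; exact isUnit_one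
  have hMinj : ∀ x : Fin 3 → ℝ, M⁻¹.mulVec (M.mulVec x) = x := by
    intro x
    rw [Matrix.mulVec_mulVec, Matrix.nonsing_inv_mul M hMdet, Matrix.one_mulVec]
  -- basis expansions
  have e3 : V 3 = a 0 • V 2 + b 0 • V 1 + V 0 := by
    have h := hrec 0
    rw [show (0:ℤ)+3 = 3 by ring, show (0:ℤ)+2 = 2 by ring, show (0:ℤ)+1 = 1 by ring,
      hc0, one_smul] at h
    exact h
  have e4 : V 4 = a 1 • V 3 + b 1 • V 2 + V 1 := by
    have h := hrec 1
    rw [show (1:ℤ)+3 = 4 by ring, show (1:ℤ)+2 = 3 by ring, show (1:ℤ)+1 = 2 by ring,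
      hcc1, one_smul] at h
    exact h
  have e5 : V 5 = a 2 • V 4 + b 2 • V 3 + V 2 := by
    have h := hrec 2
    rw [show (2:ℤ)+3 = 5 by ring, show (2:ℤ)+2 = 4 by ring, show (2:ℤ)+1 = 3 by ring,
      hcc2, one_smul] at h
    exact h
  have e6 : V 6 = a 3 • V 5 + b 3 • V 4 + V 3 := by
    have h := hrec 3
    rw [show (3:ℤ)+3 = 6 by ring, show (3:ℤ)+2 = 5 by ring, show (3:ℤ)+1 = 4 by ring,
      hcc3, one_smul] at h
    exact h
  have hV1 : V 1 = V 4 - a 1 • V 3 - b 1 • V 2 := by rw [e4]; module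
  -- independence of V2, V3, V4
  have hindep : ∀ α β γ : ℝ, α • V 2 + β • V 3 + γ • V 4 = 0 → α = 0 ∧ β = 0 ∧ γ = 0 := by
    intro α β γ h
    have hρ2eq : ρ 2 = colMat (V 2) (V 3) (V 4) := by
      rw [hρ 2, show (2:ℤ)+1 = 3 by ring, show (2:ℤ)+2 = 4 by ring]
    have h2 : (ρ 2).mulVec ![α, β, γ] = 0 := by
      rw [hρ2eq, colMat_mulVec]
      simpa using h
    have hu : IsUnit (ρ 2).det := (Matrix.isUnit_iff_isUnit_det _).mp (hρinv 2)
    have hz : (![α, β, γ] : Fin 3 → ℝ) = 0 := by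
      calc (![α, β, γ] : Fin 3 → ℝ)
          = (ρ 2)⁻¹.mulVec ((ρ 2).mulVec ![α, β, γ]) := by
            rw [Matrix.mulVec_mulVec, Matrix.nonsing_inv_mul _ hu, Matrix.one_mulVec]
        _ = 0 := by rw [h2, Matrix.mulVec_zero]
    refine ⟨?_, ?_, ?_⟩
    · simpa using congrFun hz 0
    · simpa using congrFun hz 1
    · simpa using congrFun hz 2
  -- the recurrence at n+2, pulled back through M
  have hEN : V 6 - b 3 • V 4 =
      a (n+2) • (V 5 - b 2 • V 3) + b (n+2) • (V 4 - b 1 • V 2)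
        + c (n+2) • (V 3 - b 0 • V 1) := by
    have h := hrec (n+2)
    rw [show n+2+3 = n+5 by ring, show n+2+2 = n+4 by ring, show n+2+1 = n+3 by ring,
      hW5, hW4, hW3, hW2] at h
    have h' : M.mulVec (V 6 - b 3 • V 4)
        = M.mulVec (a (n+2) • (V 5 - b 2 • V 3) + b (n+2) • (V 4 - b 1 • V 2)
            + c (n+2) • (V 3 - b 0 • V 1)) := by
      rw [h]
      simp only [Matrix.mulVec_add, Matrix.mulVec_smul]
    have h2 := congrArg (fun x => M⁻¹.mulVec x) h'
    simpa only [hMinj] using h2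
  have hcomb : (a 3 - a (n+2) + b (n+2) * b 1 - c (n+2) * (b 0 * b 1)) • V 2
      + ((1 + a 3 * b 2) - c (n+2) * (1 + a 1 * b 0)) • V 3
      + ((a 3 * a 2) - a (n+2) * a 2 - b (n+2) + c (n+2) * b 0) • V 4 = 0 := by
    have h := hEN
    rw [e6, e5, hV1] at h
    linear_combination (norm := module) h
  obtain ⟨hq1, hq2, hq3⟩ := hindep _ _ _ hcomb
  have hA1' : A 1 = 1 + a 1 * b 0 := by
    rw [hA 1, show (1:ℤ)-1 = 0 by ring, hcc1]
  have hA3' : A 3 = 1 + a 3 * b 2 := by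
    rw [hA 3, show (3:ℤ)-1 = 2 by ring, hcc3]
  have part1 : c (n+2) = A 3 / A 1 := by
    rw [eq_div_iff hA1, hA1', hA3']
    linarith
  -- the cross-product expression
  have hrecn1 : V (n+2) = a (n-1) • V (n+1) + b (n-1) • V n + c (n-1) • V (n-1) := by
    have h := hrec (n-1)
    rw [show n-1+3 = n+2 by ring, show n-1+2 = n+1 by ring, show n-1+1 = n by ring] at h
    exact h
  have hρn1eq : ρ (n-1) = colMat (V (n-1)) (V n) (V (n+1)) := by
    rw [hρ (n-1), show n-1+1 = n by ring, show n-1+2 = n+1 by ring]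
  have det1 : (colMat (V (n+1)) (V (n+2)) (V n)).det = 1 := by
    rw [show (colMat (V (n+1)) (V (n+2)) (V n)).det
        = (colMat (V n) (V (n+1)) (V (n+2))).det from det_cyc _ _ _,
      hrecn1, det_third2, show (colMat (V n) (V (n+1)) (V (n-1))).det
        = -(colMat (V n) (V (n-1)) (V (n+1))).det from det_swap23 _ _ _,
      show (colMat (V n) (V (n-1)) (V (n+1))).det
        = -(colMat (V (n-1)) (V n) (V (n+1))).det from by
          rw [show (colMat (V n) (V (n-1)) (V (n+1))).det
            = (colMat (V (n+1)) (V n) (V (n-1))).det from det_cyc _ _ _]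
          rw [show (colMat (V (n+1)) (V n) (V (n-1))).det
            = (colMat (V (n-1)) (V (n+1)) (V n)).det from det_cyc _ _ _]
          exact det_swap23 _ _ _,
      ← hρn1eq, hρn1, hccn1]
    ring
  have det2 : (colMat (V (n+1)) (V (n+2)) (V (n-1))).det = -(b (n-1)) := by
    rw [show (colMat (V (n+1)) (V (n+2)) (V (n-1))).det
        = (colMat (V (n-1)) (V (n+1)) (V (n+2))).det from det_cyc _ _ _,
      hrecn1, det_third',
      show (colMat (V (n-1)) (V (n+1)) (V n)).det
        = -(colMat (V (n-1)) (V n) (V (n+1))).det from det_swap23 _ _ _,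
      ← hρn1eq, hρn1]
    ring
  have hWT : crossProduct (crossProduct (V (n+1)) (V (n+2))) (crossProduct (V (n-1)) (V n))
      = V (n+2) - a (n-1) • V (n+1) := by
    rw [tifCrossCross, det1, det2]
    rw [hccn1, one_smul] at hrecn1
    linear_combination (norm := module) -hrecn1
  -- scalar facts
  have han1 : a (n-1) = c (-1) * a 0 := by
    rw [hcm1, div_mul_cancel₀ _ (ha 0)]
  have had : a (n-1) * (ρ (-1:ℤ)).det = a 0 := by
    rw [han1]; linear_combination a 0 * hcd
  have hab : a (n-1) * (b (-1) * (ρ (-1:ℤ)).det) = a 0 * b (-1) := by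
    rw [han1]; linear_combination a 0 * b (-1) * hcd
  have hA0' : A 0 = 1 + a 0 * b (-1) := by
    rw [hA 0, show (0:ℤ)-1 = -1 by ring, hc0]
  have hρ0eq : ρ 0 = colMat (V 0) (V 1) (V 2) := by
    rw [hρ 0, show (0:ℤ)+1 = 1 by ring, show (0:ℤ)+2 = 2 by ring]
  have hstepn : (ρ (n+1)).det = c n := by
    have h := hstep n; rw [hρn, mul_one] at h; exact h
  have hcnval : c n = (ρ (-1:ℤ)).det * (A 0 * A 1) := by
    have h := hstepn
    have hcol : ρ (n+1) = colMat (V (n+1)) (V (n+2)) (V (n+3)) := by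
      rw [hρ (n+1), show n+1+1 = n+2 by ring, show n+1+2 = n+3 by ring]
    rw [hcol, hW1, hW2, hW3, ← mul_colMat, Matrix.det_mul, hM, one_mul] at h
    have gu1 : (ρ (-1:ℤ)).det • V 2 - (b (-1) * (ρ (-1:ℤ)).det) • V 0
        = (-(b (-1) * (ρ (-1:ℤ)).det)) • V 0 + (0:ℝ) • V 1 + (ρ (-1:ℤ)).det • V 2 := by
      module
    have gu2 : V 3 - b 0 • V 1 = (1:ℝ) • V 0 + (0:ℝ) • V 1 + a 0 • V 2 := by
      rw [e3]; module
    have gu3 : V 4 - b 1 • V 2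
        = a 1 • V 0 + (a 1 * b 0 + 1) • V 1 + (a 1 * a 0) • V 2 := by
      rw [e4, e3]; module
    rw [gu1, gu2, gu3, det_combo, ← hρ0eq, hρ0, mul_one] at h
    rw [hA0', hA1', ← h]; ring
  have hcnne : c n ≠ 0 := by
    rw [← hstepn]
    exact ((Matrix.isUnit_iff_isUnit_det _).mp (hρinv (n+1))).ne_zero
  have hccn : c (-1) * c n = A 0 * A 1 := by
    rw [hcnval]; linear_combination (A 0 * A 1) * hcd
  have hA0ne : A 0 ≠ 0 := by
    intro h0
    rw [h0, zero_mul] at hccn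
    exact (mul_ne_zero hcne hcnne) hccn
  have hK : A 0 ^ 2 * A 1 / (c (-1) * c n) = A 0 := by
    rw [hccn]; field_simp
  have part2 : M⁻¹.mulVec (crossProduct
        (crossProduct (V (n+1)) (V (n+2))) (crossProduct (V (n-1)) (V n)))
      = (A 0 ^ 2 * A 1 / (c (-1) * c n)) • V 0 := by
    rw [hWT, hW2, hW1, hK]
    have hpull : M.mulVec (V 3 - b 0 • V 1)
          - a (n-1) • (M.mulVec ((ρ (-1:ℤ)).det • V 2 - (b (-1) * (ρ (-1:ℤ)).det) • V 0))
        = M.mulVec ((V 3 - b 0 • V 1)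
          - a (n-1) • ((ρ (-1:ℤ)).det • V 2 - (b (-1) * (ρ (-1:ℤ)).det) • V 0)) := by
      simp only [Matrix.mulVec_sub, Matrix.mulVec_smul]
    rw [hpull, hMinj]
    linear_combination (norm := module) e3 - had • V 2 + hab • V 0 - hA0' • V 0
  refine ⟨part1, part2, ?_⟩
  rw [Matrix.mulVec_smul, part2, smul_smul]
  congr 1
  rw [part1, hccn]
  field_simp
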